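/- Let G be a strongly connected directed graph on vertex set {1,...,m} (each vertex having a self-loop) and fix q ∈ {1,...,m}. Then there exists a real m×m matrix G = [g_ij] with all row sums equal to zero, and with g_ij = 0 whenever there is no arc from j to i in the graph, such that the pair (G, e_q) is controllable, where e_q is the q-th standard basis vector of ℝ^m. -/

import Mathlib

open Matrix

/-- The controllability matrix `[b, Gb, ..., G^(m-1) b]` of a pair `(G, b)` with
`b` a vector. -/
noncomputable def ctrbVec {m : ℕ} (G : Matrix (Fin m) (Fin m) ℝ) (b : Fin m → ℝ) :
    Matrix (Fin m) (Fin m) ℝ :=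
  fun i k => (G ^ (k : ℕ) *ᵥ b) i

namespace Stmt2Aux


variable {m : ℕ}

lemma escape (arc : Fin m → Fin m → Prop) (S : Finset (Fin m))
    {q w : Fin m} (hq : q ∈ S) (hw : w ∉ S) (h : Relation.ReflTransGen arc q w) :
    ∃ x ∈ S, ∃ y, y ∉ S ∧ arc x y := by
  induction h with
  | refl => exact absurd hq hw
  | @tail b c hab hbc ih =>
    by_cases hb : b ∈ S
    · exact ⟨b, hb, c, hw, hbc⟩
    · exact ih hb

lemma exists_list (arc : Fin m → Fin m → Prop)
    (hsc : ∀ i j, Relation.ReflTransGen arc i j) (q : Fin m) (hm : 0 < m) :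
    ∃ l : List (Fin m), l.length = m ∧ l.Nodup ∧
      (∀ h0 : 0 < l.length, l[0] = q) ∧
      (∀ k, (hk : k < l.length) → 0 < k →
        ∃ j, ∃ hj : j < k, arc (l[j]'(hj.trans hk)) (l[k]'hk)) := by
  have key : ∀ n : ℕ, ∃ l : List (Fin m), l.length = min (n+1) m ∧ l.Nodup ∧
      (∀ h0 : 0 < l.length, l[0] = q) ∧
      (∀ k, (hk : k < l.length) → 0 < k →
        ∃ j, ∃ hj : j < k, arc (l[j]'(hj.trans hk)) (l[k]'hk)) := by
    intro n
    induction n with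
    | zero =>
      refine ⟨[q], ?_, by simp, by simp, ?_⟩
      · simp; omega
      · intro k hk h0
        simp at hk; omega
    | succ n ih =>
      obtain ⟨l, hlen, hnd, hhd, hch⟩ := ih
      by_cases hfull : l.length = m
      · exact ⟨l, by omega, hnd, hhd, hch⟩
      · have hlt : l.length < m := by omega
        have h0 : 0 < l.length := by omega
        have hq : q ∈ l.toFinset := by
          rw [List.mem_toFinset]
          exact hhd h0 ▸ List.getElem_mem h0
        have hne : l.toFinset ≠ Finset.univ := by
          intro h
          have hcard := Finset.card_univ (α := Fin m)
          rw [← h, List.card_toFinset, hnd.dedup] at hcard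
          simp at hcard; omega
        obtain ⟨w, hw⟩ : ∃ w, w ∉ l.toFinset := by
          by_contra hco
          push_neg at hco
          exact hne (Finset.eq_univ_iff_forall.mpr hco)
        obtain ⟨x, hx, y, hy, hxy⟩ := escape arc l.toFinset hq hw (hsc q w)
        refine ⟨l ++ [y], ?_, ?_, ?_, ?_⟩
        · simp only [List.length_append, List.length_singleton]; omega
        · rw [List.nodup_append]
          refine ⟨hnd, List.nodup_singleton y, ?_⟩
          intro a ha b hb' hb
          simp at hb'; subst hb'
          subst hb
          exact hy (List.mem_toFinset.mpr ha)
        · intro hh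
          rw [List.getElem_append_left h0]
          exact hhd h0
        · intro k hk hk0
          have hk' : k < l.length + 1 := by simpa using hk
          rcases lt_or_eq_of_le (Nat.lt_succ_iff.mp hk') with hkl | hkl
          · obtain ⟨j, hj, ha⟩ := hch k hkl hk0
            refine ⟨j, hj, ?_⟩
            rw [List.getElem_append_left (hj.trans hkl), List.getElem_append_left hkl]
            exact ha
          · obtain ⟨j, hjl, hjx⟩ := List.mem_iff_getElem.mp (List.mem_toFinset.mp hx)
            refine ⟨j, by omega, ?_⟩
            have h1 : (l ++ [y])[j]'(by simp; omega) = l[j] :=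
              List.getElem_append_left hjl
            have h2 : (l ++ [y])[k]'hk = y := by
              subst hkl; simp
            rw [h1, h2, hjx]
            exact hxy
  obtain ⟨l, h1, h2, h3, h4⟩ := key (m - 1)
  exact ⟨l, by omega, h2, h3, h4⟩


-- variable separator

variable {n : ℕ}

/-- Position-space matrix: lower triangular, row `k` has entry `k` at column `par k`
and `-k` on the diagonal. -/
def Hmat (par : Fin (n+1) → Fin (n+1)) : Matrix (Fin (n+1)) (Fin (n+1)) ℝ :=
  fun k l => (if par k = l then (k.val : ℝ) else 0) + (if k = l then -(k.val : ℝ) else 0)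

section
variable (par : Fin (n+1) → Fin (n+1))

lemma exists_iter (hpar : ∀ k, k ≠ 0 → par k < k) :
    ∀ j : Fin (n+1), ∃ t, par^[t] j = 0 := by
  suffices H : ∀ N (j : Fin (n+1)), j.val ≤ N → ∃ t, par^[t] j = 0 by
    exact fun j => H (n+1) j (le_of_lt j.isLt)
  intro N
  induction N with
  | zero =>
    intro j hj
    have : j = 0 := by
      ext; simpa using hj
    exact ⟨0, this⟩
  | succ N ih =>
    intro j hj
    by_cases h0 : j = 0
    · exact ⟨0, h0⟩
    · have hlt := hpar j h0
      obtain ⟨t, ht⟩ := ih (par j) (by omega)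
      exact ⟨t + 1, by rw [Function.iterate_succ_apply]; exact ht⟩

variable (hpar : ∀ k, k ≠ 0 → par k < k)

/-- Depth of a position: number of parent steps to reach 0. -/
noncomputable def dep (j : Fin (n+1)) : ℕ :=
  Nat.find (exists_iter par hpar j)

lemma dep_spec (j : Fin (n+1)) : par^[dep par hpar j] j = 0 :=
  Nat.find_spec (exists_iter par hpar j)

lemma dep_min {j : Fin (n+1)} {t : ℕ} (ht : t < dep par hpar j) : par^[t] j ≠ 0 :=
  Nat.find_min (exists_iter par hpar j) ht

lemma iter_succ_lt {j : Fin (n+1)} {t : ℕ} (ht : t < dep par hpar j) :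
    par^[t+1] j < par^[t] j := by
  rw [Function.iterate_succ_apply']
  exact hpar _ (dep_min par hpar ht)

lemma iter_strict_anti {j : Fin (n+1)} {s t : ℕ} (hst : s < t)
    (ht : t ≤ dep par hpar j) : par^[t] j < par^[s] j := by
  induction t with
  | zero => omega
  | succ t ih =>
    have h1 : par^[t+1] j < par^[t] j := iter_succ_lt par hpar (by omega)
    rcases Nat.lt_or_ge s t with h | h
    · exact h1.trans (ih h (by omega))
    · have : s = t := by omega
      subst this; exact h1

lemma iter_inj {j : Fin (n+1)} {s t : ℕ} (hs : s ≤ dep par hpar j)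
    (ht : t ≤ dep par hpar j) (h : par^[s] j = par^[t] j) : s = t := by
  rcases Nat.lt_trichotomy s t with hst | hst | hst
  · exact absurd h (ne_of_gt (iter_strict_anti par hpar hst ht))
  · exact hst
  · exact absurd h (ne_of_lt (iter_strict_anti par hpar hst hs))

lemma iter_lt_self {j : Fin (n+1)} {t : ℕ} (h1 : 1 ≤ t) (ht : t ≤ dep par hpar j) :
    par^[t] j < j := by
  have := iter_strict_anti par hpar (show 0 < t by omega) ht
  simpa using this

/-- Value of the left eigenvector along the ancestor chain. -/
noncomputable def cw (j : Fin (n+1)) : ℕ → ℝ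
  | 0 => 1
  | t+1 => cw j t * ((par^[t] j).val : ℝ) / (((par^[t+1] j).val : ℝ) - (j.val : ℝ))

lemma cw_ne_zero {j : Fin (n+1)} {t : ℕ} (ht : t ≤ dep par hpar j) :
    cw par j t ≠ 0 := by
  induction t with
  | zero => norm_num [cw]
  | succ t ih =>
    have h1 : cw par j t ≠ 0 := ih (by omega)
    have h2 : ((par^[t] j).val : ℝ) ≠ 0 := by
      have := dep_min par hpar (show t < dep par hpar j by omega)
      intro hc
      exact this (by exact_mod_cast hc)
    have h3 : (((par^[t+1] j).val : ℝ) - (j.val : ℝ)) ≠ 0 := by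
      have := iter_lt_self par hpar (show 1 ≤ t+1 by omega) ht
      have hv : (par^[t+1] j).val < j.val := this
      intro hc
      have : ((par^[t+1] j).val : ℝ) = (j.val : ℝ) := by linarith
      exact absurd (Nat.cast_injective this) (by omega)
    exact div_ne_zero (mul_ne_zero h1 h2) h3

/-- The left eigenvector of `Hmat par` for eigenvalue `-j`. -/
noncomputable def wv (j : Fin (n+1)) : Fin (n+1) → ℝ := fun i =>
  if h : ∃ t, t ≤ dep par hpar j ∧ par^[t] j = i then cw par j h.choose else 0

lemma wv_iter {j : Fin (n+1)} {t : ℕ} (ht : t ≤ dep par hpar j) :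
    wv par hpar j (par^[t] j) = cw par j t := by
  have h : ∃ s, s ≤ dep par hpar j ∧ par^[s] j = par^[t] j := ⟨t, ht, rfl⟩
  rw [wv, dif_pos h]
  congr 1
  exact iter_inj par hpar h.choose_spec.1 ht h.choose_spec.2

lemma wv_eq_zero {j i : Fin (n+1)} (h : ∀ t, t ≤ dep par hpar j → par^[t] j ≠ i) :
    wv par hpar j i = 0 := by
  rw [wv, dif_neg]
  rintro ⟨t, ht, hti⟩
  exact h t ht hti

lemma wv_zero_ne_zero (j : Fin (n+1)) : wv par hpar j 0 ≠ 0 := by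
  have := wv_iter par hpar (le_refl (dep par hpar j))
  rw [dep_spec par hpar j] at this
  rw [this]
  exact cw_ne_zero par hpar (le_refl _)

lemma sum_children (j i : Fin (n+1)) :
    (∑ l, if par l = i then wv par hpar j l * (l.val : ℝ) else 0)
      = ((i.val : ℝ) - (j.val : ℝ)) * wv par hpar j i := by
  classical
  by_cases hch : ∃ t, t ≤ dep par hpar j ∧ par^[t] j = i
  · obtain ⟨t, ht, hti⟩ := hch
    rcases Nat.eq_zero_or_pos t with rfl | htpos
    · -- i = j
      simp only [Function.iterate_zero_apply] at hti
      subst hti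
      rw [sub_self, zero_mul]
      apply Finset.sum_eq_zero
      intro l _
      split_ifs with hpl
      · by_cases hl : ∃ s, s ≤ dep par hpar j ∧ par^[s] j = l
        · obtain ⟨s, hs, hsl⟩ := hl
          rcases eq_or_lt_of_le hs with hsd | hsd
          · have hl0 : l = 0 := by rw [← hsl, hsd]; exact dep_spec par hpar j
            rw [hl0]; simp
          · exfalso
            have heq : par^[s+1] j = par^[0] j := by
              rw [Function.iterate_succ_apply', hsl, hpl, Function.iterate_zero_apply]
            have := iter_inj par hpar (by omega) (Nat.zero_le _) heq
            omega
        · rw [wv_eq_zero par hpar (fun s hs hsl => hl ⟨s, hs, hsl⟩), zero_mul]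
      · rfl
    · obtain ⟨t', rfl⟩ : ∃ t', t = t' + 1 := ⟨t - 1, by omega⟩
      have hne : (i.val : ℝ) - (j.val : ℝ) ≠ 0 := by
        have hv : (par^[t'+1] j).val < j.val := iter_lt_self par hpar (by omega) ht
        rw [hti] at hv
        intro hc
        have h' : (i.val : ℝ) = (j.val : ℝ) := by linarith
        have := Nat.cast_injective h'
        omega
      have hstep : par (par^[t'] j) = i := by
        rw [← Function.iterate_succ_apply' par t' j]; exact hti
      have hsum : (∑ l, if par l = i then wv par hpar j l * (l.val : ℝ) else 0)
          = wv par hpar j (par^[t'] j) * ((par^[t'] j).val : ℝ) := by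
        rw [Finset.sum_eq_single (par^[t'] j)]
        · rw [if_pos hstep]
        · intro l _ hlne
          split_ifs with hpl
          · by_cases hl : ∃ s, s ≤ dep par hpar j ∧ par^[s] j = l
            · obtain ⟨s, hs, hsl⟩ := hl
              rcases eq_or_lt_of_le hs with hsd | hsd
              · have hl0 : l = 0 := by rw [← hsl, hsd]; exact dep_spec par hpar j
                rw [hl0]; simp
              · exfalso
                have heq : par^[s+1] j = par^[t'+1] j := by
                  rw [Function.iterate_succ_apply', hsl, hpl, hti]
                have := iter_inj par hpar (by omega) ht heq
                apply hlne
                rw [← hsl]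
                congr 1
                omega
            · rw [wv_eq_zero par hpar (fun s hs hsl => hl ⟨s, hs, hsl⟩), zero_mul]
          · rfl
        · intro h
          exact absurd (Finset.mem_univ _) h
      rw [hsum, wv_iter par hpar (by omega : t' ≤ dep par hpar j)]
      rw [← hti, wv_iter par hpar ht]
      have hcw : cw par j (t'+1)
          = cw par j t' * ((par^[t'] j).val : ℝ) / (((par^[t'+1] j).val : ℝ) - (j.val : ℝ)) := rfl
      rw [hcw, hti] at *
      field_simp
  · push_neg at hch
    rw [wv_eq_zero par hpar hch, mul_zero]
    apply Finset.sum_eq_zero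
    intro l _
    split_ifs with hpl
    · by_cases hl : ∃ s, s ≤ dep par hpar j ∧ par^[s] j = l
      · obtain ⟨s, hs, hsl⟩ := hl
        rcases eq_or_lt_of_le hs with hsd | hsd
        · have hl0 : l = 0 := by rw [← hsl, hsd]; exact dep_spec par hpar j
          rw [hl0]; simp
        · exfalso
          apply hch (s+1) (by omega)
          rw [Function.iterate_succ_apply', hsl, hpl]
      · rw [wv_eq_zero par hpar (fun s hs hsl => hl ⟨s, hs, hsl⟩), zero_mul]
    · rfl

lemma vecMul_eig (j : Fin (n+1)) :
    wv par hpar j ᵥ* Hmat par = (-(j.val : ℝ)) • wv par hpar j := by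
  funext i
  have hv : (wv par hpar j ᵥ* Hmat par) i = ∑ l, wv par hpar j l * Hmat par l i := rfl
  rw [hv]
  have hsplit : ∀ l : Fin (n+1), wv par hpar j l * Hmat par l i
      = (if par l = i then wv par hpar j l * (l.val : ℝ) else 0)
        + (if l = i then wv par hpar j l * (-(l.val : ℝ)) else 0) := by
    intro l
    show wv par hpar j l * ((if par l = i then ((l.val : ℝ)) else 0)
        + (if l = i then -(l.val : ℝ) else 0)) = _
    rw [mul_add, mul_ite, mul_zero, mul_ite, mul_zero]
  rw [Finset.sum_congr rfl (fun l _ => hsplit l), Finset.sum_add_distrib]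
  rw [sum_children par hpar j i]
  rw [Finset.sum_ite_eq' Finset.univ i (fun l => wv par hpar j l * (-(l.val : ℝ)))]
  simp only [Finset.mem_univ, if_true, Pi.smul_apply, smul_eq_mul]
  ring

lemma vecMul_pow (j : Fin (n+1)) (k : ℕ) :
    wv par hpar j ᵥ* (Hmat par) ^ k = ((-(j.val : ℝ)) ^ k) • wv par hpar j := by
  induction k with
  | zero => simp
  | succ k ih =>
    rw [pow_succ, ← vecMul_vecMul, ih, smul_vecMul, vecMul_eig par hpar j,
      smul_smul, ← pow_succ]

end

section

lemma hmat_rank (par : Fin (n+1) → Fin (n+1)) (hpar : ∀ k, k ≠ 0 → par k < k) :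
    (ctrbVec (Hmat par) (fun i => if i = 0 then 1 else 0)).rank = n + 1 := by
  classical
  set e0 : Fin (n+1) → ℝ := fun i => if i = 0 then 1 else 0 with he0
  have hdot : ∀ (j : Fin (n+1)) (k : ℕ),
      wv par hpar j ⬝ᵥ ((Hmat par) ^ k *ᵥ e0) = (-(j.val : ℝ)) ^ k * wv par hpar j 0 := by
    intro j k
    rw [dotProduct_mulVec, vecMul_pow par hpar j k, smul_dotProduct, smul_eq_mul]
    congr 1
    simp [dotProduct, he0]
  have hker : ∀ c : Fin (n+1) → ℝ, ctrbVec (Hmat par) e0 *ᵥ c = 0 → c = 0 := by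
    intro c hc
    have hj : ∀ j : Fin (n+1), ∑ k : Fin (n+1), (-(j.val : ℝ)) ^ (k.val) * c k = 0 := by
      intro j
      have h0 : wv par hpar j ⬝ᵥ (ctrbVec (Hmat par) e0 *ᵥ c) = 0 := by
        rw [hc, dotProduct_zero]
      rw [dotProduct_mulVec] at h0
      have hrow : ∀ k : Fin (n+1), (wv par hpar j ᵥ* ctrbVec (Hmat par) e0) k
          = (-(j.val : ℝ)) ^ (k.val) * wv par hpar j 0 := by
        intro k
        have : (wv par hpar j ᵥ* ctrbVec (Hmat par) e0) k
            = wv par hpar j ⬝ᵥ ((Hmat par) ^ (k.val) *ᵥ e0) := rfl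
        rw [this, hdot j k.val]
      have h1 : (∑ k : Fin (n+1), ((-(j.val : ℝ)) ^ (k.val) * wv par hpar j 0) * c k) = 0 := by
        rw [← h0, dotProduct]
        exact Finset.sum_congr rfl (fun k _ => by rw [hrow k])
      have h2 : wv par hpar j 0 * (∑ k : Fin (n+1), (-(j.val : ℝ)) ^ (k.val) * c k) = 0 := by
        rw [Finset.mul_sum]
        rw [← h1]
        exact Finset.sum_congr rfl (fun k _ => by ring)
      rcases mul_eq_zero.mp h2 with h | h
      · exact absurd h (wv_zero_ne_zero par hpar j)
      · exact h
    set f : Fin (n+1) → ℝ := fun j => -(j.val : ℝ) with hf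
    have hV : vandermonde f *ᵥ c = 0 := by
      funext j
      have : (vandermonde f *ᵥ c) j = ∑ k : Fin (n+1), f j ^ (k.val) * c k := by
        simp [mulVec, dotProduct, vandermonde]
      rw [this]
      exact hj j
    have hfinj : Function.Injective f := by
      intro a b hab
      simp only [hf, neg_inj] at hab
      exact Fin.ext (Nat.cast_injective hab)
    have hdet : (vandermonde f).det ≠ 0 := det_vandermonde_ne_zero_iff.mpr hfinj
    have hUV : IsUnit (vandermonde f) :=
      (Matrix.isUnit_iff_isUnit_det _).mpr (isUnit_iff_ne_zero.mpr hdet)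
    have := Matrix.mulVec_injective_iff_isUnit.mpr hUV
    apply this
    rw [hV, Matrix.mulVec_zero]
  have hinj : Function.Injective (ctrbVec (Hmat par) e0).mulVec := by
    intro a b hab
    have := hker (a - b) (by rw [Matrix.mulVec_sub, hab, sub_self])
    exact sub_eq_zero.mp this
  have hU : IsUnit (ctrbVec (Hmat par) e0) := Matrix.mulVec_injective_iff_isUnit.mp hinj
  rw [Matrix.rank_of_isUnit _ hU]
  simp

end

end Stmt2Aux

/-- For a strongly connected directed graph on `{1,...,m}` (with self-loops) and
any fixed vertex `q`, there is a real `m × m` matrix `G` with zero row sums,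
respecting the graph's sparsity pattern (`G i j = 0` when there is no arc from
`j` to `i`), such that `(G, e_q)` is a controllable pair. -/
theorem stmt2 {m : ℕ} (arc : Fin m → Fin m → Prop)
    (hself : ∀ i, arc i i)
    (hsc : ∀ i j, Relation.ReflTransGen arc i j)
    (q : Fin m) :
    ∃ G : Matrix (Fin m) (Fin m) ℝ,
      (∀ i, ∑ j, G i j = 0) ∧
      (∀ i j, ¬ arc j i → G i j = 0) ∧
      (ctrbVec G (fun i => if i = q then 1 else 0)).rank = m := by
  classical
  obtain ⟨n, rfl⟩ : ∃ n, m = n + 1 := ⟨m - 1, by have := q.pos; omega⟩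
  obtain ⟨l, hlen, hnd, hhd, hch⟩ := Stmt2Aux.exists_list arc hsc q (by omega)
  have hl0 : 0 < l.length := by omega
  set v : Fin (n+1) → Fin (n+1) := fun k => l[k.val]'(by omega) with hv
  have hvinj : Function.Injective v := by
    intro a b h
    have hinj := List.nodup_iff_injective_getElem.mp hnd
    have h2 := hinj (a₁ := ⟨a.val, by omega⟩) (a₂ := ⟨b.val, by omega⟩) h
    have h3 := congrArg (fun x : Fin l.length => x.val) h2
    exact Fin.ext h3
  have hvbij := Finite.injective_iff_bijective.mp hvinj
  set e : Fin (n+1) ≃ Fin (n+1) := Equiv.ofBijective v hvbij with he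
  set σ : Fin (n+1) ≃ Fin (n+1) := e.symm with hσdef
  have hσ : ∀ i, v (σ i) = i := fun i => e.apply_symm_apply i
  have hσ' : ∀ k, σ (v k) = k := fun k => e.symm_apply_apply k
  have hv0 : v 0 = q := hhd hl0
  have hchA : ∀ k : Fin (n+1), k ≠ 0 → ∃ j : Fin (n+1), j < k ∧ arc (v j) (v k) := by
    intro k hk
    have hkv : k.val ≠ 0 := by
      intro h
      exact hk (Fin.ext (by simp [h]))
    obtain ⟨j, hj, ha⟩ := hch k.val (by omega) (by omega)
    refine ⟨⟨j, by omega⟩, by simpa [Fin.lt_def] using hj, ?_⟩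
    exact ha
  set par : Fin (n+1) → Fin (n+1) := fun k => if hk : k = 0 then 0 else (hchA k hk).choose
    with hpardef
  have hpar : ∀ k, k ≠ 0 → par k < k := by
    intro k hk
    simp only [hpardef, dif_neg hk]
    exact (hchA k hk).choose_spec.1
  have hparc : ∀ k, k ≠ 0 → arc (v (par k)) (v k) := by
    intro k hk
    simp only [hpardef, dif_neg hk]
    exact (hchA k hk).choose_spec.2
  refine ⟨(Stmt2Aux.Hmat par).submatrix σ σ, ?_, ?_, ?_⟩
  · intro i
    have hsum : ∀ x, (Stmt2Aux.Hmat par).submatrix σ σ i x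
        = (fun y => Stmt2Aux.Hmat par (σ i) y) (σ x) := fun x => rfl
    rw [Finset.sum_congr rfl (fun x _ => hsum x), Equiv.sum_comp σ]
    simp [Stmt2Aux.Hmat, Finset.sum_add_distrib, Finset.sum_ite_eq]
  · intro i j hna
    have hii : i ≠ j := fun h => hna (h ▸ hself i)
    have h2 : σ i ≠ σ j := fun h => hii (by rw [← hσ i, ← hσ j, h])
    have h1 : par (σ i) ≠ σ j := by
      intro h
      by_cases h0 : σ i = 0
      · apply h2
        rw [h0]
        rw [h0] at h
        rw [← h]
        simp [hpardef]
      · have ha := hparc (σ i) h0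
        rw [h, hσ i, hσ j] at ha
        exact hna ha
    show Stmt2Aux.Hmat par (σ i) (σ j) = 0
    rw [Stmt2Aux.Hmat]
    rw [if_neg h1, if_neg h2, add_zero]
  · have hb : (fun i : Fin (n+1) => if i = q then (1:ℝ) else 0)
        = (fun k : Fin (n+1) => if k = 0 then (1:ℝ) else 0) ∘ ⇑σ := by
      funext i
      have hiff : (i = q) ↔ (σ i = 0) := by
        constructor
        · intro h; rw [h, ← hv0, hσ']
        · intro h
          have := congrArg v h
          rw [hσ i, hv0] at this
          exact this
      simp only [Function.comp]
      rw [if_congr hiff rfl rfl]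
    have hpow : ∀ K : ℕ, ((Stmt2Aux.Hmat par).submatrix σ σ) ^ K
        = ((Stmt2Aux.Hmat par) ^ K).submatrix σ σ := by
      intro K
      induction K with
      | zero => simp [Matrix.submatrix_one_equiv]
      | succ K ih => rw [pow_succ, pow_succ, ih, Matrix.submatrix_mul_equiv]
    have hctrb : ctrbVec ((Stmt2Aux.Hmat par).submatrix σ σ)
          (fun i => if i = q then (1:ℝ) else 0)
        = (ctrbVec (Stmt2Aux.Hmat par) (fun k => if k = 0 then (1:ℝ) else 0)).submatrix
            ⇑σ ⇑(Equiv.refl (Fin (n+1))) := by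
      funext i k
      show (((Stmt2Aux.Hmat par).submatrix σ σ) ^ (k:ℕ) *ᵥ _) i = _
      rw [hpow, hb, Matrix.submatrix_mulVec_equiv]
      have hcomp : ((fun k : Fin (n+1) => if k = 0 then (1:ℝ) else 0) ∘ ⇑σ) ∘ ⇑σ.symm
          = (fun k : Fin (n+1) => if k = 0 then (1:ℝ) else 0) := by
        funext x
        simp only [Function.comp]
        rw [Equiv.apply_symm_apply]
      rw [hcomp]
      rfl
    rw [hctrb, Matrix.rank_submatrix]
    exact Stmt2Aux.hmat_rank par hpar
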